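/- For every finite set U of reduced words, there is a unique finite set U_min of reduced words of minimal cardinality with C¹_{U_min} = C¹_U; moreover U_min = U*(C¹_U) = {u | C¹_u ⊆ C¹_U and C¹_{u|₁} ⊄ C¹_U}, and C¹_U is the disjoint union of the cylinders C¹_u, u ∈ U_min. -/

import Mathlib

open List

variable {A : Type*} [Fintype A] [DecidableEq A]

/-- The formal inverse of a letter in `A ∪ A⁻¹`, encoded as `A × Bool`. -/
def Linv (x : A × Bool) : A × Bool := (x.1, !x.2)

/-- A finite word is reduced if no letter is followed by its inverse. -/
def RedWord (w : List (A × Bool)) : Prop := w.Chain' (fun x y => y ≠ Linv x)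

/-- An infinite word is reduced if no letter is followed by its inverse. -/
def InfRed (X : ℕ → A × Bool) : Prop := ∀ n, X (n + 1) ≠ Linv (X n)

/-- The boundary `∂F(A)`: the set of infinite reduced words. -/
abbrev Bdry (A : Type*) := {X : ℕ → A × Bool // InfRed X}

/-- The prefix of length `n` of an infinite word. -/
def wpre (X : ℕ → A × Bool) (n : ℕ) : List (A × Bool) := (List.range n).map X

/-- The cylinder `C¹_u`: infinite reduced words having `u` as a prefix. -/
def Cyl (u : List (A × Bool)) : Set (Bdry A) := {X | wpre X.val u.length = u}

/-- The multi-cylinder `C¹_U` for a finite set `U` of words. -/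
def CylS (U : Finset (List (A × Bool))) : Set (Bdry A) := ⋃ u ∈ U, Cyl u

/-- `u|^k` : the set of reduced words obtained from `u` by appending `k` letters. -/
def extW (u : List (A × Bool)) (k : ℕ) : Set (List (A × Bool)) :=
  {v | RedWord v ∧ u <+: v ∧ v.length = u.length + k}

/-- `U*(B)`: the reduced words `u` with `C¹_u ⊆ B` but `C¹_{u|₁} ⊄ B`
(with the convention that the empty word `1` has no word `u|₁` below it). -/
def Ustar (B : Set (Bdry A)) : Set (List (A × Bool)) :=
  {u | RedWord u ∧ Cyl u ⊆ B ∧ (u = [] ∨ ¬ Cyl u.dropLast ⊆ B)}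

/- ### Auxiliary lemmas -/

lemma wpre_length (X : ℕ → A × Bool) (n : ℕ) : (wpre X n).length = n := by
  simp [wpre]

lemma take_wpre (X : ℕ → A × Bool) (m n : ℕ) : (wpre X n).take m = wpre X (min m n) := by
  simp [wpre, ← List.map_take, List.take_range]

lemma wpre_prefix (X : ℕ → A × Bool) {m n : ℕ} (h : m ≤ n) : wpre X m <+: wpre X n := by
  rw [← min_eq_left h, ← take_wpre]
  exact take_prefix _ _

lemma mem_Cyl {X : Bdry A} {u : List (A × Bool)} : X ∈ Cyl u ↔ wpre X.1 u.length = u :=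
  Iff.rfl

lemma mem_Cyl_apply {X : Bdry A} {v : List (A × Bool)} (h : X ∈ Cyl v) (i : ℕ)
    (hi : i < v.length) : X.1 i = v[i] := by
  have h' : wpre X.1 v.length = v := h
  have h2 : (wpre X.1 v.length)[i]? = v[i]? := by rw [h']
  rw [wpre, List.getElem?_map, List.getElem?_range hi, List.getElem?_eq_getElem hi] at h2
  simpa using h2

lemma redWord_wpre {X : ℕ → A × Bool} (hX : InfRed X) (n : ℕ) : RedWord (wpre X n) := by
  refine isChain_iff_getElem.mpr ?_
  intro i h
  rw [wpre_length] at h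
  simp only [get_eq_getElem, wpre, List.getElem_map, List.getElem_range]
  exact hX i

lemma exists_avoid (hA : 2 ≤ Fintype.card A) (x y : A × Bool) :
    ∃ z : A × Bool, z ≠ x ∧ z ≠ y := by
  have hcard : 4 ≤ Fintype.card (A × Bool) := by
    rw [Fintype.card_prod, Fintype.card_bool]; omega
  have h2 : ({x, y} : Finset (A × Bool)).card ≤ 2 :=
    (Finset.card_insert_le _ _).trans (by simp)
  have hne : ((Finset.univ : Finset (A × Bool)) \ {x, y}).Nonempty := by
    rw [← Finset.card_pos, Finset.card_sdiff_of_subset (Finset.subset_univ _), Finset.card_univ]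
    omega
  obtain ⟨z, hz⟩ := hne
  simp only [Finset.mem_sdiff, Finset.mem_insert, Finset.mem_singleton, Finset.mem_univ,
    true_and, not_or] at hz
  exact ⟨z, hz.1, hz.2⟩

lemma exists_mem_cyl_avoid (hA : 2 ≤ Fintype.card A) {u : List (A × Bool)}
    (hu : RedWord u) (c : A × Bool) :
    ∃ X : Bdry A, X ∈ Cyl u ∧ X.1 u.length ≠ c := by
  classical
  choose f hf1 hf2 using exists_avoid hA
  set a0 : A × Bool := if h : u = [] then c else u.getLast h with ha0
  let g : ℕ → A × Bool := fun n =>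
    Nat.rec (f (Linv a0) c) (fun _ prev => f (Linv prev) (Linv prev)) n
  set X : ℕ → A × Bool := fun n =>
    if h : n < u.length then u[n] else g (n - u.length) with hX
  have hXu : ∀ i (h : i < u.length), X i = u[i] := fun i h => dif_pos h
  have hXg : ∀ i, u.length ≤ i → X i = g (i - u.length) := fun i h => dif_neg (by omega)
  have hg0 : g 0 = f (Linv a0) c := rfl
  have hgs : ∀ k, g (k + 1) = f (Linv (g k)) (Linv (g k)) := fun k => rfl
  have hred : InfRed X := by
    intro n
    rcases lt_trichotomy (n + 1) u.length with h | h | h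
    · rw [hXu n (by omega), hXu (n + 1) h]
      have := isChain_iff_getElem.mp hu n (by omega)
      simpa using this
    · have hn : n < u.length := by omega
      have hne' : u ≠ [] := by
        intro he; rw [he] at h; simp at h
      rw [hXu n hn, hXg (n + 1) (by omega)]
      have h0 : n + 1 - u.length = 0 := by omega
      rw [h0, hg0]
      have hlast : u[n] = a0 := by
        rw [ha0, dif_neg hne', List.getLast_eq_getElem]
        congr 1
        omega
      rw [hlast]
      exact hf1 _ _
    · rw [hXg n (by omega), hXg (n + 1) (by omega)]
      have h0 : n + 1 - u.length = (n - u.length) + 1 := by omega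
      rw [h0, hgs]
      exact hf1 _ _
  have hpre : wpre X u.length = u := by
    apply List.ext_get (by rw [wpre_length])
    intro i h1 h2
    simp only [get_eq_getElem, wpre, List.getElem_map, List.getElem_range]
    rw [wpre_length] at h1
    exact hXu i h1
  refine ⟨⟨X, hred⟩, hpre, ?_⟩
  show X u.length ≠ c
  rw [hXg u.length le_rfl, Nat.sub_self, hg0]
  exact hf2 _ _

lemma cyl_nonempty (hA : 2 ≤ Fintype.card A) {u : List (A × Bool)} (hu : RedWord u) :
    (Cyl u : Set (Bdry A)).Nonempty := by
  have hpos : 0 < Fintype.card A := by omega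
  obtain ⟨a⟩ := Fintype.card_pos_iff.mp hpos
  obtain ⟨X, hX, -⟩ := exists_mem_cyl_avoid hA hu (a, true)
  exact ⟨X, hX⟩

lemma Cyl_anti {u v : List (A × Bool)} (h : u <+: v) : (Cyl v : Set (Bdry A)) ⊆ Cyl u := by
  intro X hX
  rw [mem_Cyl] at hX ⊢
  calc wpre X.1 u.length = (wpre X.1 v.length).take u.length := by
        rw [take_wpre, min_eq_left h.length_le]
    _ = v.take u.length := by rw [hX]
    _ = u := (prefix_iff_eq_take.mp h).symm

lemma prefix_of_mem_Cyl {u v : List (A × Bool)} {X : Bdry A} (hu : X ∈ Cyl u)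
    (hv : X ∈ Cyl v) (h : u.length ≤ v.length) : u <+: v := by
  rw [mem_Cyl] at hu hv
  rw [← hu, ← hv]
  exact wpre_prefix _ h

lemma Ustar_eq_of_prefix {B : Set (Bdry A)} {u v : List (A × Bool)}
    (hu : u ∈ Ustar B) (hv : v ∈ Ustar B) (h : u <+: v) : u = v := by
  by_contra hne
  have hlt : u.length < v.length :=
    lt_of_le_of_ne h.length_le (fun he => hne (h.eq_of_length he))
  have hvne : v ≠ [] := by
    intro he; rw [he] at hlt; simp at hlt
  have hpd : u <+: v.dropLast := by
    rw [dropLast_eq_take]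
    exact prefix_take_iff.mpr ⟨h, by omega⟩
  rcases hv.2.2 with he | hnsub
  · exact hvne he
  · exact hnsub ((Cyl_anti hpd).trans hu.2.1)

lemma exists_Ustar_prefix {B : Set (Bdry A)} {v : List (A × Bool)}
    (hv : RedWord v) (hvB : (Cyl v : Set (Bdry A)) ⊆ B) :
    ∃ u, u ∈ Ustar B ∧ u <+: v := by
  classical
  have hex : ∃ n, (Cyl (v.take n) : Set (Bdry A)) ⊆ B := ⟨v.length, by rwa [take_length]⟩
  set n := Nat.find hex with hn
  have hspec : (Cyl (v.take n) : Set (Bdry A)) ⊆ B := Nat.find_spec hex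
  have hnle : n ≤ v.length := Nat.find_le (by rwa [take_length])
  refine ⟨v.take n, ⟨List.IsChain.prefix hv (take_prefix _ _), hspec, ?_⟩, take_prefix _ _⟩
  rcases Nat.eq_zero_or_pos n with h0 | hpos
  · left; rw [h0]; simp
  · right
    intro hsub
    have hd : (v.take n).dropLast = v.take (n - 1) := by
      rw [dropLast_eq_take, take_take, length_take]
      congr 1
      omega
    rw [hd] at hsub
    exact Nat.find_min hex (by omega : n - 1 < n) hsub

lemma cyl_subset_CylS {U : Finset (List (A × Bool))} {w : List (A × Bool)} (hw : w ∈ U) :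
    (Cyl w : Set (Bdry A)) ⊆ CylS U :=
  fun X hX => Set.mem_iUnion₂.mpr ⟨w, hw, hX⟩

lemma Ustar_length_le (hA : 2 ≤ Fintype.card A) (U : Finset (List (A × Bool)))
    {u : List (A × Bool)} (hu : u ∈ Ustar (CylS U)) : u.length ≤ U.sup List.length := by
  by_contra hlen
  push_neg at hlen
  obtain ⟨X, hX⟩ := cyl_nonempty hA hu.1
  obtain ⟨w, hwU, hXw⟩ := Set.mem_iUnion₂.mp (hu.2.1 hX)
  have hwlen : w.length ≤ U.sup List.length := Finset.le_sup hwU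
  have hwin : w <+: u := prefix_of_mem_Cyl hXw hX (by omega)
  have hune : u ≠ [] := by
    intro he; rw [he] at hlen; simp at hlen
  have hwd : w <+: u.dropLast := by
    rw [dropLast_eq_take]
    exact prefix_take_iff.mpr ⟨hwin, by omega⟩
  rcases hu.2.2 with he | hn
  · exact hune he
  · exact hn ((Cyl_anti hwd).trans (cyl_subset_CylS hwU))

theorem exists_unique_minimal_multicylinder_rep (hA : 2 ≤ Fintype.card A)
    (U : Finset (List (A × Bool))) (hU : ∀ u ∈ U, RedWord u) :
    ∃ Umin : Finset (List (A × Bool)),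
      (↑Umin : Set (List (A × Bool))) = Ustar (CylS U) ∧
      CylS Umin = CylS U ∧
      (∀ V : Finset (List (A × Bool)), (∀ v ∈ V, RedWord v) → CylS V = CylS U →
        Umin.card ≤ V.card ∧ (V.card = Umin.card → V = Umin)) ∧
      (∀ u ∈ Umin, ∀ v ∈ Umin, u ≠ v → Cyl u ∩ Cyl v = (∅ : Set (Bdry A))) := by
  classical
  have hfin : (Ustar (CylS U) : Set (List (A × Bool))).Finite :=
    Set.Finite.subset (List.finite_length_le (A × Bool) (U.sup List.length))
      (fun u hu => Ustar_length_le hA U hu)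
  refine ⟨hfin.toFinset, hfin.coe_toFinset, ?_, ?_, ?_⟩
  · -- CylS Umin = CylS U
    apply Set.Subset.antisymm
    · intro X hX
      obtain ⟨u, huU, hXu⟩ := Set.mem_iUnion₂.mp hX
      rw [Set.Finite.mem_toFinset] at huU
      exact huU.2.1 hXu
    · intro X hX
      obtain ⟨w, hwU, hXw⟩ := Set.mem_iUnion₂.mp hX
      obtain ⟨u, huS, hupre⟩ := exists_Ustar_prefix (hU w hwU) (cyl_subset_CylS hwU)
      exact Set.mem_iUnion₂.mpr ⟨u, (Set.Finite.mem_toFinset _).mpr huS, Cyl_anti hupre hXw⟩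
  · -- minimality and uniqueness
    intro V hVred hVU
    have hVB : ∀ v ∈ V, (Cyl v : Set (Bdry A)) ⊆ CylS U :=
      fun v hv => hVU ▸ cyl_subset_CylS hv
    have hex : ∀ v : List (A × Bool), ∃ u, v ∈ V → (u ∈ Ustar (CylS U) ∧ u <+: v) := by
      intro v
      by_cases hv : v ∈ V
      · obtain ⟨u, h1, h2⟩ := exists_Ustar_prefix (hVred v hv) (hVB v hv)
        exact ⟨u, fun _ => ⟨h1, h2⟩⟩
      · exact ⟨[], fun h => absurd h hv⟩
    choose h hh using hex
    -- surjectivity of h : V → Umin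
    have hsurj : ∀ u ∈ hfin.toFinset, ∃ v ∈ V, h v = u := by
      intro u huM
      rw [Set.Finite.mem_toFinset] at huM
      obtain ⟨X, hXu⟩ := cyl_nonempty hA huM.1
      have hXB : X ∈ CylS U := huM.2.1 hXu
      rw [← hVU] at hXB
      obtain ⟨v, hvV, hXv⟩ := Set.mem_iUnion₂.mp hXB
      obtain ⟨hhU, hhpre⟩ := hh v hvV
      have hXhv : X ∈ Cyl (h v) := Cyl_anti hhpre hXv
      have : h v = u := by
        rcases le_total (h v).length u.length with hl | hl
        · exact Ustar_eq_of_prefix hhU huM (prefix_of_mem_Cyl hXhv hXu hl)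
        · exact (Ustar_eq_of_prefix huM hhU (prefix_of_mem_Cyl hXu hXhv hl)).symm
      exact ⟨v, hvV, this⟩
    have hcard : hfin.toFinset.card ≤ V.card := by
      apply Finset.card_le_card_of_surjOn h
      intro u hu
      obtain ⟨v, hv, he⟩ := hsurj u (by simpa using hu)
      exact ⟨v, by simpa using hv, he⟩
    refine ⟨hcard, fun hcardeq => ?_⟩
    have hmem : ∀ v ∈ V, h v ∈ hfin.toFinset :=
      fun v hv => (Set.Finite.mem_toFinset _).mpr (hh v hv).1
    have hinj := Finset.inj_on_of_surj_on_of_card_le (fun v _ => h v) (fun v hv => hmem v hv)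
      (fun u hu => by
        obtain ⟨v, hv, he⟩ := hsurj u hu
        exact ⟨v, hv, he⟩)
      (le_of_eq hcardeq)
    have hid : ∀ v ∈ V, h v = v := by
      intro v hv
      by_contra hne
      obtain ⟨hhU, hhpre⟩ := hh v hv
      have hlt : (h v).length < v.length :=
        lt_of_le_of_ne hhpre.length_le (fun he => hne (hhpre.eq_of_length he))
      obtain ⟨X, hXhv, hXc⟩ := exists_mem_cyl_avoid hA hhU.1 (v[(h v).length])
      have hXB : X ∈ CylS U := hhU.2.1 hXhv
      rw [← hVU] at hXB
      obtain ⟨v', hv'V, hXv'⟩ := Set.mem_iUnion₂.mp hXB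
      obtain ⟨hhU', hhpre'⟩ := hh v' hv'V
      have hXhv' : X ∈ Cyl (h v') := Cyl_anti hhpre' hXv'
      have heq : h v' = h v := by
        rcases le_total (h v').length (h v).length with hl | hl
        · exact Ustar_eq_of_prefix hhU' hhU (prefix_of_mem_Cyl hXhv' hXhv hl)
        · exact (Ustar_eq_of_prefix hhU hhU' (prefix_of_mem_Cyl hXhv hXhv' hl)).symm
      have hvv : v' = v := hinj hv'V hv heq
      rw [hvv] at hXv'
      exact hXc (mem_Cyl_apply hXv' (h v).length hlt)
    have hsub : V ⊆ hfin.toFinset := fun v hv => by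
      rw [← hid v hv]; exact hmem v hv
    exact Finset.eq_of_subset_of_card_le hsub hcard
  · -- disjointness
    intro u huM v hvM hne
    rw [Set.Finite.mem_toFinset] at huM hvM
    ext X
    simp only [Set.mem_inter_iff, Set.mem_empty_iff_false, iff_false, not_and]
    intro hXu hXv
    rcases le_total u.length v.length with hl | hl
    · exact hne (Ustar_eq_of_prefix huM hvM (prefix_of_mem_Cyl hXu hXv hl))
    · exact hne ((Ustar_eq_of_prefix hvM huM (prefix_of_mem_Cyl hXv hXu hl)).symm)
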